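/- Let π : Ũ ⟶ U be a universal map (an exponentiable map with a chosen right adjoint to postcomposition, i.e., chosen pullbacks) and p' : E' ⟶ B' any map in a finitely complete category. Given a tower of two pullback squares exhibiting X₂ ⟶ X₁ as a pullback of p' and X₁ ⟶ X₀ as a pullback of π, the composite X₂ ⟶ X₀ arises as a pullback of the generic composite GenComp(p', π) : ev^*(Ũ ×_U E') ⟶ π^*π_*(Ũ ×_U B') ⟶ π_*(Ũ ×_U B') along a canonical map X₀ ⟶ π_*(Ũ ×_U B'). -/

import Mathlib

open CategoryTheory CategoryTheory.Limits

noncomputable section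

variable {C : Type*} [Category C] [HasFiniteLimits C]

/-- The pushforward `π_*(Ũ × B')` of the product projection, as an object of `C/U`. -/
def genQ {Ut U : C} (π : Ut ⟶ U) [(Over.pullback π).IsLeftAdjoint] (B' : C) : Over U :=
  (Over.pullback π).rightAdjoint.obj (Over.mk (prod.fst : Ut ⨯ B' ⟶ Ut))

/-- The counit `ev : π^*π_*(Ũ × B') ⟶ Ũ × B'` of the pullback–pushforward adjunction. -/
def genCounit {Ut U : C} (π : Ut ⟶ U) [(Over.pullback π).IsLeftAdjoint] (B' : C) :
    (Over.pullback π).obj (genQ π B') ⟶ Over.mk (prod.fst : Ut ⨯ B' ⟶ Ut) :=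
  (Adjunction.ofIsLeftAdjoint (Over.pullback π)).counit.app _

/-- The composite `π^*π_*(Ũ × B') ⟶ Ũ × B' ⟶ B'` along which the generic composite
pulls back `p' : E' ⟶ B'`. -/
def evBase {Ut U : C} (π : Ut ⟶ U) [(Over.pullback π).IsLeftAdjoint] (B' : C) :
    pullback (genQ π B').hom π ⟶ B' :=
  (genCounit π B').left ≫ (prod.snd : Ut ⨯ B' ⟶ B')

/-- given a tower of two pullback squares exhibiting `X₂ ⟶ X₁` as a
pullback of `p' : E' ⟶ B'` and `X₁ ⟶ X₀` as a pullback of the universal map `π`, the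
composite `X₂ ⟶ X₁ ⟶ X₀` arises as the pullback of the generic composite
`GenComp(p', π) : ev^*(Ũ × E') ⟶ π^*π_*(Ũ × B') ⟶ π_*(Ũ × B')` along a map
`X₀ ⟶ π_*(Ũ × B')`. -/
theorem generic_composite_classifies {Ut U E' B' : C} (π : Ut ⟶ U)
    [(Over.pullback π).IsLeftAdjoint] (p' : E' ⟶ B')
    {X₀ X₁ X₂ : C} (q₁ : X₁ ⟶ X₀) (q₂ : X₂ ⟶ X₁)
    (c₁ : X₀ ⟶ U) (a : X₁ ⟶ Ut) (h₁ : IsPullback a q₁ π c₁)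
    (c₂ : X₁ ⟶ B') (b : X₂ ⟶ E') (h₂ : IsPullback b q₂ p' c₂) :
    ∃ (m : X₀ ⟶ (genQ π B').left)
      (m₁ : X₁ ⟶ pullback (genQ π B').hom π)
      (m₂ : X₂ ⟶ pullback p' (evBase π B')),
      IsPullback m₁ q₁ (pullback.fst (genQ π B').hom π) m ∧
      IsPullback m₂ q₂ (pullback.snd p' (evBase π B')) m₁ := by
  set adj := Adjunction.ofIsLeftAdjoint (Over.pullback π) with hadj
  -- comparison iso `pullback c₁ π ≅ X₁`
  let σ : pullback c₁ π ⟶ X₁ := (pullbackSymmetry c₁ π).hom ≫ h₁.isoPullback.inv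
  let τ : X₁ ⟶ pullback c₁ π := h₁.isoPullback.hom ≫ (pullbackSymmetry c₁ π).inv
  have hσa : σ ≫ a = pullback.snd c₁ π := by simp [σ]
  have hσq : σ ≫ q₁ = pullback.fst c₁ π := by simp [σ]
  have hτq : τ ≫ pullback.fst c₁ π = q₁ := by simp [τ]
  have hτa : τ ≫ pullback.snd c₁ π = a := by simp [τ]
  have hτσ : τ ≫ σ = 𝟙 X₁ := by simp [τ, σ]
  -- the map over `Ut` from the pullback to `Ũ ⨯ B'`
  let φ : (Over.pullback π).obj (Over.mk c₁) ⟶ Over.mk (prod.fst : Ut ⨯ B' ⟶ Ut) :=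
    Over.homMk (prod.lift (pullback.snd c₁ π) (σ ≫ c₂)) (by exact prod.lift_fst _ _)
  -- the transpose `Over.mk c₁ ⟶ genQ π B'`
  let m' : Over.mk c₁ ⟶ genQ π B' := adj.homEquiv _ _ φ
  have hm'counit : (Over.pullback π).map m' ≫ (genCounit π B') = φ := by
    have := adj.homEquiv_counit (X := Over.mk c₁)
      (Y := Over.mk (prod.fst : Ut ⨯ B' ⟶ Ut)) (g := m')
    simp only [m'] at this ⊢
    rw [genCounit, ← hadj]
    exact this.symm.trans (Equiv.symm_apply_apply _ _)
  have hm'counit_left : ((Over.pullback π).map m').left ≫ (genCounit π B').left =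
      prod.lift (pullback.snd c₁ π) (σ ≫ c₂) := by
    have := congrArg CommaMorphism.left hm'counit
    simpa [φ] using this
  have hw : (q₁ ≫ m'.left) ≫ (genQ π B').hom = a ≫ π := by
    rw [Category.assoc, Over.w m']; exact h₁.w.symm
  let m₁ : X₁ ⟶ pullback (genQ π B').hom π := pullback.lift (q₁ ≫ m'.left) a hw
  have hm₁fst : m₁ ≫ pullback.fst (genQ π B').hom π = q₁ ≫ m'.left := pullback.lift_fst _ _ _
  have hm₁snd : m₁ ≫ pullback.snd (genQ π B').hom π = a := pullback.lift_snd _ _ _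
  -- `m₁` factors through the image of `m'` under the pullback functor
  have hfac : m₁ = τ ≫ ((Over.pullback π).map m').left := by
    apply pullback.hom_ext
    · rw [hm₁fst, Category.assoc]
      simp only [Over.pullback_map_left, pullback.lift_fst, Over.mk_hom, Over.mk_left]
      rw [← Category.assoc, hτq]
    · rw [hm₁snd, Category.assoc]
      simp only [Over.pullback_map_left, pullback.lift_snd, Over.mk_hom, Over.mk_left]
      exact hτa.symm
  have key : m₁ ≫ evBase π B' = c₂ := by
    rw [hfac, evBase, Category.assoc, ← Category.assoc _ _ (prod.snd),
      hm'counit_left, prod.lift_snd, ← Category.assoc, hτσ, Category.id_comp]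
  have hw₂ : b ≫ p' = (q₂ ≫ m₁) ≫ evBase π B' := by
    rw [Category.assoc, key]; exact h₂.w
  let m₂ : X₂ ⟶ pullback p' (evBase π B') := pullback.lift b (q₂ ≫ m₁) hw₂
  refine ⟨m'.left, m₁, m₂, ?_, ?_⟩
  · -- first pullback square
    apply IsPullback.of_right (h₁₂ := pullback.snd (genQ π B').hom π)
      (h₂₂ := (genQ π B').hom) (v₁₃ := π)
    · rw [hm₁snd, Over.w m']; exact h₁
    · exact hm₁fst
    · exact (IsPullback.of_hasPullback (genQ π B').hom π).flip
  · -- second pullback square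
    apply IsPullback.of_right (h₁₂ := pullback.fst p' (evBase π B'))
      (h₂₂ := evBase π B') (v₁₃ := p')
    · rw [pullback.lift_fst, key]; exact h₂
    · exact pullback.lift_snd _ _ _
    · exact IsPullback.of_hasPullback p' (evBase π B')

end
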